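/- Define, for nonnegative integers i, m, the polynomial 2·F~_i^m(x,y) = ∑_{u=0}^{m} binom(m,u)·(-1)^u·m!/((m+i+u+1/2)_{m+1}) · (x+m+i+u)_{2m+2i+2u+1} · (y+m+i)_{m-u} · (y-i-u-1)_{m-u}. Then the recurrence ((2i-1)/(2m+2))·2F~_{i-1}^{m+1}(x,y) = (x² + y² − (i+m+1)² − i²)·2F~_i^m(x,y) − 2·2F~_{i+1}^m(x,y) holds for all integers i ≥ 1 and m ≥ 0. -/
import Mathlib

/-- Falling factorial `(a)_k = a(a-1)⋯(a-k+1)`. -/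
noncomputable def ff {R : Type*} [CommRing R] (a : R) (k : ℕ) : R :=
  ∏ j ∈ Finset.range k, (a - (j : R))

/-- `f2 i m x y = 2·F̃ᵢᵐ(x,y)`, twice the deformed polynomial of Feigin–Wang–Yoshinaga. -/
noncomputable def f2 (i m : ℕ) (x y : ℚ) : ℚ :=
  ∑ u ∈ Finset.range (m+1),
    (m.choose u : ℚ) * (-1)^u * (m.factorial : ℚ) / ff ((m:ℚ) + i + u + 1/2) (m+1)
      * ff (x + m + i + u) (2*m+2*i+2*u+1) * ff (y + m + i) (m-u) * ff (y - i - u - 1) (m-u)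

/-- `Ft i m x y = F̃ᵢᵐ(x,y)`. -/
noncomputable def Ft (i m : ℕ) (x y : ℚ) : ℚ := f2 i m x y / 2

/- ### auxiliary definitions -/

noncomputable def DD (m i u : ℕ) : ℚ := ff ((m:ℚ) + i + u + 1/2) (m+1)
noncomputable def cc (m i u : ℕ) : ℚ :=
  (m.choose u : ℚ) * (-1)^u * (m.factorial : ℚ) / DD m i u
noncomputable def AA (m i : ℕ) (x : ℚ) (u : ℕ) : ℚ := ff (x + m + i + u) (2*m+2*i+2*u+1)
noncomputable def BB (m i : ℕ) (y : ℚ) (u : ℕ) : ℚ := ff (y + m + i) (m-u)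
noncomputable def CC (m i : ℕ) (y : ℚ) (u : ℕ) : ℚ := ff (y - i - u - 1) (m-u)

lemma f2_eq (i m : ℕ) (x y : ℚ) :
    f2 i m x y
      = ∑ u ∈ Finset.range (m+1), cc m i u * AA m i x u * BB m i y u * CC m i y u := rfl

/- ### basic ff lemmas -/

lemma ff_succ (a : ℚ) (k : ℕ) : ff a (k+1) = ff a k * (a - k) := Finset.prod_range_succ _ _

lemma ff_succ' (a : ℚ) (k : ℕ) : ff a (k+1) = a * ff (a-1) k := by
  unfold ff
  rw [Finset.prod_range_succ']
  rw [mul_comm]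
  congr 1
  · norm_num
  · exact Finset.prod_congr rfl fun j _ => by push_cast; ring

lemma ff_shift (a : ℚ) (k : ℕ) : ff (a+1) (k+1) * (a - k) = (a+1) * ff a (k+1) := by
  rw [ff_succ', show a + 1 - 1 = a from by ring, ff_succ]
  ring

/- ### DD lemmas -/

lemma DD_ne (m i u : ℕ) : DD m i u ≠ 0 := by
  unfold DD ff
  rw [Finset.prod_ne_zero_iff]
  intro j _ h
  have h2 : (2*(m+i+u)+1 : ℚ) = 2*j := by linarith
  have h3 : 2*(m+i+u)+1 = 2*j := by exact_mod_cast h2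
  omega

lemma DD_shift (m i u : ℕ) :
    DD m i (u+1) * ((i:ℚ)+u+1/2) = ((m:ℚ)+i+u+3/2) * DD m i u := by
  have h := ff_shift ((m:ℚ)+i+u+1/2) m
  simp only [DD]
  rw [show (m:ℚ) + i + ((u+1:ℕ):ℚ) + 1/2 = ((m:ℚ)+i+u+1/2)+1 from by push_cast; ring]
  linear_combination h

lemma DD_step (m k u : ℕ) : DD (m+1) k u = DD m (k+1) u * ((k:ℚ)+u+1/2) := by
  simp only [DD]
  rw [show ((m+1:ℕ):ℚ) + (k:ℚ) + (u:ℚ) + 1/2 = (m:ℚ) + ((k+1:ℕ):ℚ) + (u:ℚ) + 1/2 from by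
        push_cast; ring]
  rw [ff_succ]
  congr 1
  push_cast
  ring

lemma DD_istep (m k u : ℕ) : DD m (k+2) u = DD m (k+1) (u+1) := by
  simp only [DD]
  rw [show (m:ℚ) + ((k+2:ℕ):ℚ) + (u:ℚ) + 1/2 = (m:ℚ) + ((k+1:ℕ):ℚ) + ((u+1:ℕ):ℚ) + 1/2 from by
        push_cast; ring]

/- ### AA lemmas -/

lemma AA_succ (m i : ℕ) (x : ℚ) (u : ℕ) :
    AA m i x (u+1) = (x + ((m:ℚ)+i+u+1)) * (x - ((m:ℚ)+i+u+1)) * AA m i x u := by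
  unfold AA
  rw [show 2*m+2*i+2*(u+1)+1 = (2*m+2*i+2*u+1)+1+1 from by ring]
  rw [ff_succ', ff_succ]
  rw [show x + (m:ℚ) + (i:ℚ) + ((u+1:ℕ):ℚ) - 1 = x + (m:ℚ) + (i:ℚ) + (u:ℚ) from by
        push_cast; ring]
  push_cast
  ring

lemma AA_step (m k : ℕ) (x : ℚ) (u : ℕ) : AA (m+1) k x u = AA m (k+1) x u := by
  unfold AA
  rw [show x + ((m+1:ℕ):ℚ) + (k:ℚ) + (u:ℚ) = x + (m:ℚ) + ((k+1:ℕ):ℚ) + (u:ℚ) from by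
        push_cast; ring,
      show 2*(m+1)+2*k+2*u+1 = 2*m+2*(k+1)+2*u+1 from by ring]

lemma AA_istep (m k : ℕ) (x : ℚ) (u : ℕ) : AA m (k+2) x u = AA m (k+1) x (u+1) := by
  unfold AA
  rw [show x + (m:ℚ) + ((k+2:ℕ):ℚ) + (u:ℚ) = x + (m:ℚ) + ((k+1:ℕ):ℚ) + ((u+1:ℕ):ℚ) from by
        push_cast; ring,
      show 2*m+2*(k+2)+2*u+1 = 2*m+2*(k+1)+2*(u+1)+1 from by ring]

/- ### B·C product lemmas -/

lemma R1 (m k v : ℕ) (hv : v ≤ m) (y : ℚ) :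
    BB (m+1) k y v * CC (m+1) k y v
      = (y + ((k:ℚ)+v+1)) * (y - ((k:ℚ)+v+1)) * (BB m (k+1) y v * CC m (k+1) y v) := by
  simp only [BB, CC]
  rw [show m+1-v = (m-v)+1 from by omega, ff_succ, ff_succ']
  rw [show y + ((m+1:ℕ):ℚ) + (k:ℚ) = y + (m:ℚ) + ((k+1:ℕ):ℚ) from by push_cast; ring]
  rw [show y - (k:ℚ) - (v:ℚ) - 1 - 1 = y - ((k+1:ℕ):ℚ) - (v:ℚ) - 1 from by push_cast; ring]
  rw [Nat.cast_sub hv]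
  push_cast
  ring

lemma R2 (m k u : ℕ) (h : u+1 ≤ m) (y : ℚ) :
    BB m (k+1) y u * CC m (k+1) y u
      = (y + ((k:ℚ)+u+2)) * (y - ((k:ℚ)+u+2)) * (BB m (k+1) y (u+1) * CC m (k+1) y (u+1)) := by
  simp only [BB, CC]
  rw [show m-u = (m-(u+1))+1 from by omega, ff_succ, ff_succ']
  rw [show y - ((k+1:ℕ):ℚ) - (u:ℚ) - 1 - 1 = y - ((k+1:ℕ):ℚ) - ((u+1:ℕ):ℚ) - 1 from by
        push_cast; ring]
  rw [Nat.cast_sub h]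
  push_cast
  ring

lemma R3 (m k u : ℕ) (h : u+1 ≤ m) (y : ℚ) :
    BB m (k+2) y u * CC m (k+2) y u
      = (y + ((m:ℚ)+k+2)) * (y - ((m:ℚ)+k+2)) * (BB m (k+1) y (u+1) * CC m (k+1) y (u+1)) := by
  simp only [BB, CC]
  rw [show m-u = (m-(u+1))+1 from by omega, ff_succ', ff_succ]
  rw [show y + (m:ℚ) + ((k+2:ℕ):ℚ) - 1 = y + (m:ℚ) + ((k+1:ℕ):ℚ) from by push_cast; ring]
  rw [show y - ((k+2:ℕ):ℚ) - (u:ℚ) - 1 = y - ((k+1:ℕ):ℚ) - ((u+1:ℕ):ℚ) - 1 from by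
        push_cast; ring]
  rw [Nat.cast_sub h]
  push_cast
  ring

/- ### scalar identities -/

lemma S0 (m k : ℕ) :
    (2*((k:ℚ)+1)-1)/(2*(m:ℚ)+2) * cc (m+1) k 0 = cc m (k+1) 0 := by
  have hne : DD m (k+1) 0 ≠ 0 := DD_ne _ _ _
  have h2 : ((k:ℚ) + (0:ℕ) + 1/2) ≠ 0 := by positivity
  have hm : (2*(m:ℚ)+2) ≠ 0 := by positivity
  simp only [cc, Nat.choose_zero_right, Nat.cast_one]
  rw [DD_step m k 0, Nat.factorial_succ]
  push_cast at h2 ⊢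
  field_simp
  ring

lemma Sstar (m k u : ℕ) (h : u + 1 ≤ m) (y : ℚ) :
    (2*((k:ℚ)+1)-1)/(2*(m:ℚ)+2) * cc (m+1) k (u+1) * (y^2 - ((k:ℚ)+u+2)^2)
      = cc m (k+1) (u+1) * (y^2 + ((m:ℚ)+k+u+3)^2 - ((m:ℚ)+k+2)^2 - ((k:ℚ)+1)^2)
        + cc m (k+1) u * (y^2 - ((k:ℚ)+u+2)^2)
        - 2 * cc m (k+2) u * (y^2 - ((m:ℚ)+k+2)^2) := by
  have hD1 : DD m (k+1) (u+1) ≠ 0 := DD_ne _ _ _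
  have hne1 : ((m:ℚ)+k+u+5/2) ≠ 0 := by positivity
  have hne2 : ((k:ℚ)+u+3/2) ≠ 0 := by positivity
  have hne3 : ((u:ℚ)+1) ≠ 0 := by positivity
  have hne4 : (2*(m:ℚ)+2) ≠ 0 := by positivity
  have hD0 : DD m (k+1) u = DD m (k+1) (u+1) * ((k:ℚ)+u+3/2) / ((m:ℚ)+k+u+5/2) := by
    rw [eq_div_iff hne1]
    have hsh := DD_shift m (k+1) u
    push_cast at hsh
    linear_combination -hsh
  have hstep : DD (m+1) k (u+1) = DD m (k+1) (u+1) * ((k:ℚ)+u+3/2) := by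
    have h2 := DD_step m k (u+1)
    push_cast at h2
    linear_combination h2
  have hq : DD m (k+2) u = DD m (k+1) (u+1) := DD_istep m k u
  have hcN : ((m+1).choose (u+1) : ℚ) = (m.choose u : ℚ) + (m.choose (u+1) : ℚ) := by
    exact_mod_cast congrArg (Nat.cast (R := ℚ)) (Nat.choose_succ_succ m u)
  have he : (m.choose (u+1) : ℚ) = (m.choose u : ℚ) * ((m:ℚ)-u) / ((u:ℚ)+1) := by
    rw [eq_div_iff hne3]
    have h3 := Nat.choose_succ_right_eq m u
    have h4 : ((m.choose (u+1) : ℚ)) * (((u+1:ℕ)):ℚ) = (m.choose u : ℚ) * (((m-u:ℕ)):ℚ) := by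
      exact_mod_cast congrArg (Nat.cast (R := ℚ)) h3
    rw [Nat.cast_sub (by omega : u ≤ m)] at h4
    push_cast at h4
    linear_combination h4
  have hfac : ((m+1).factorial : ℚ) = ((m:ℚ)+1) * (m.factorial : ℚ) := by
    rw [Nat.factorial_succ]; push_cast; ring
  simp only [cc]
  rw [hstep, hq, hcN, he, hD0, hfac, pow_succ]
  field_simp
  ring

lemma Sb (m k : ℕ) :
    (2*((k:ℚ)+1)-1)/(2*(m:ℚ)+2) * cc (m+1) k (m+1) = cc m (k+1) m - 2 * cc m (k+2) m := by
  have hD1 : DD m (k+1) (m+1) ≠ 0 := DD_ne _ _ _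
  have hne1 : ((m:ℚ)+k+m+5/2) ≠ 0 := by positivity
  have hne2 : ((k:ℚ)+m+3/2) ≠ 0 := by positivity
  have hne4 : (2*(m:ℚ)+2) ≠ 0 := by positivity
  have hD0 : DD m (k+1) m = DD m (k+1) (m+1) * ((k:ℚ)+m+3/2) / ((m:ℚ)+k+m+5/2) := by
    rw [eq_div_iff hne1]
    have hsh := DD_shift m (k+1) m
    push_cast at hsh
    linear_combination -hsh
  have hstep : DD (m+1) k (m+1) = DD m (k+1) (m+1) * ((k:ℚ)+m+3/2) := by
    have h2 := DD_step m k (m+1)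
    push_cast at h2
    linear_combination h2
  have hq : DD m (k+2) m = DD m (k+1) (m+1) := DD_istep m k m
  have hfac : ((m+1).factorial : ℚ) = ((m:ℚ)+1) * (m.factorial : ℚ) := by
    rw [Nat.factorial_succ]; push_cast; ring
  simp only [cc, Nat.choose_self, Nat.cast_one]
  rw [hstep, hq, hD0, hfac, pow_succ]
  field_simp
  ring

/- ### the four termwise pieces -/

noncomputable def Lt (m k : ℕ) (x y : ℚ) (u : ℕ) : ℚ :=
  cc (m+1) k u * AA m (k+1) x u * BB (m+1) k y u * CC (m+1) k y u
noncomputable def Mt (m k : ℕ) (x y : ℚ) (u : ℕ) : ℚ :=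
  cc m (k+1) u * (y^2 + ((m:ℚ)+k+u+2)^2 - ((m:ℚ)+k+2)^2 - ((k:ℚ)+1)^2)
    * AA m (k+1) x u * BB m (k+1) y u * CC m (k+1) y u
noncomputable def Pt (m k : ℕ) (x y : ℚ) (u : ℕ) : ℚ :=
  cc m (k+1) u * AA m (k+1) x (u+1) * BB m (k+1) y u * CC m (k+1) y u
noncomputable def Qt (m k : ℕ) (x y : ℚ) (u : ℕ) : ℚ :=
  cc m (k+2) u * AA m (k+1) x (u+1) * BB m (k+2) y u * CC m (k+2) y u

lemma Mt_top (m k : ℕ) (x y : ℚ) : Mt m k x y (m+1) = 0 := by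
  simp [Mt, cc, Nat.choose_succ_self]

/- ### main theorem -/

theorem stmt3 (i m : ℕ) (hi : 1 ≤ i) (x y : ℚ) :
    (2*(i:ℚ) - 1) / (2*(m:ℚ) + 2) * f2 (i-1) (m+1) x y =
      (x^2 + y^2 - ((i:ℚ) + m + 1)^2 - (i:ℚ)^2) * f2 i m x y - 2 * f2 (i+1) m x y := by
  obtain ⟨k, rfl⟩ : ∃ k, i = k + 1 := ⟨i - 1, by omega⟩
  clear hi
  have hL : f2 (k+1-1) (m+1) x y = ∑ u ∈ Finset.range ((m+1)+1), Lt m k x y u := by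
    show f2 k (m+1) x y = _
    rw [f2_eq]
    refine Finset.sum_congr rfl fun u _ => ?_
    simp only [Lt]
    rw [AA_step]
  have hQ : f2 (k+1+1) m x y = ∑ u ∈ Finset.range (m+1), Qt m k x y u := by
    show f2 (k+2) m x y = _
    rw [f2_eq]
    refine Finset.sum_congr rfl fun u _ => ?_
    simp only [Qt]
    rw [AA_istep]
  have hMP : (x^2 + y^2 - (((k+1:ℕ):ℚ) + (m:ℚ) + 1)^2 - ((k+1:ℕ):ℚ)^2) * f2 (k+1) m x y
      = ∑ u ∈ Finset.range (m+1), (Mt m k x y u + Pt m k x y u) := by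
    rw [f2_eq, Finset.mul_sum]
    refine Finset.sum_congr rfl fun u _ => ?_
    simp only [Mt, Pt]
    rw [AA_succ]
    push_cast
    ring
  have E1 : ∑ u ∈ Finset.range ((m+1)+1), Lt m k x y u
      = (∑ u ∈ Finset.range (m+1), Lt m k x y (u+1)) + Lt m k x y 0 :=
    Finset.sum_range_succ' _ _
  have hC1 : (2*((k+1:ℕ):ℚ)-1)/(2*(m:ℚ)+2) * Lt m k x y 0 = Mt m k x y 0 := by
    have hR := R1 m k 0 (Nat.zero_le m) y
    have hS := S0 m k
    simp only [Lt, Mt]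
    push_cast at hR hS ⊢
    linear_combination ((2*(k:ℚ)+1)/(2*(m:ℚ)+2) * cc (m+1) k 0 * AA m (k+1) x 0) * hR
      + (AA m (k+1) x 0 * BB m (k+1) y 0 * CC m (k+1) y 0
          * ((y + ((k:ℚ)+1)) * (y - ((k:ℚ)+1)))) * hS
  have hter : ∑ u ∈ Finset.range (m+1), (2*((k+1:ℕ):ℚ)-1)/(2*(m:ℚ)+2) * Lt m k x y (u+1)
      = ∑ u ∈ Finset.range (m+1), (Mt m k x y (u+1) + Pt m k x y u - 2 * Qt m k x y u) := by
    refine Finset.sum_congr rfl fun u hu => ?_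
    rcases Nat.lt_or_ge u m with hlt | hge
    · have h1 : u + 1 ≤ m := hlt
      have hR1 := R1 m k (u+1) h1 y
      have hR2 := R2 m k u h1 y
      have hR3 := R3 m k u h1 y
      have hS := Sstar m k u h1 y
      simp only [Lt, Mt, Pt, Qt]
      push_cast at hR1 ⊢
      linear_combination
        ((2*(k:ℚ)+1)/(2*(m:ℚ)+2) * cc (m+1) k (u+1) * AA m (k+1) x (u+1)) * hR1
        - (cc m (k+1) u * AA m (k+1) x (u+1)) * hR2
        + (2 * cc m (k+2) u * AA m (k+1) x (u+1)) * hR3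
        + (AA m (k+1) x (u+1) * BB m (k+1) y (u+1) * CC m (k+1) y (u+1)) * hS
    · have hu' : u = m := by
        have := Finset.mem_range.mp hu
        omega
      rw [hu', Mt_top]
      have e1 : BB (m+1) k y (m+1) = 1 := by simp [BB, ff]
      have e2 : CC (m+1) k y (m+1) = 1 := by simp [CC, ff]
      have e3 : BB m (k+1) y m = 1 := by simp [BB, ff]
      have e4 : CC m (k+1) y m = 1 := by simp [CC, ff]
      have e5 : BB m (k+2) y m = 1 := by simp [BB, ff]
      have e6 : CC m (k+2) y m = 1 := by simp [CC, ff]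
      have hS := Sb m k
      simp only [Lt, Pt, Qt, e1, e2, e3, e4, e5, e6, mul_one]
      push_cast
      linear_combination (AA m (k+1) x (m+1)) * hS
  have E4 : ∑ u ∈ Finset.range (m+1), Mt m k x y (u+1)
      = (∑ u ∈ Finset.range (m+1), Mt m k x y u) - Mt m k x y 0 := by
    rw [Finset.sum_range_succ (fun u => Mt m k x y (u+1)) m,
        Finset.sum_range_succ' (fun u => Mt m k x y u) m, Mt_top]
    ring
  rw [hL, hQ, hMP, E1, mul_add, Finset.mul_sum, hC1, hter, Finset.sum_sub_distrib,
      Finset.sum_add_distrib, E4, Finset.sum_add_distrib, ← Finset.mul_sum]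
  ring
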